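/- (Existence of the Hermite–Jacobi action via the exact Egorov identity.) Let h : ℤ^g × ℤ^g → ℤ^g × ℤ^g be a group automorphism preserving the standard symplectic form ω((p,q),(p',q')) = Σ_{j=1}^g (p_j q'_j − q_j p'_j). Then there exists a unitary operator ρ(h) : V → V such that ρ(h) ∘ O_{pq} ∘ ρ(h)⁻¹ = O_{h(p,q)} for all p, q ∈ ℤ^g, where O_{h(p,q)} denotes the operator O_{p'q'} with (p',q') = h(p,q). -/

import Mathlib

open Finset

/-- The underlying `ℤ^g × ℤ^g` of the Heisenberg group. -/
abbrev HVec (g : ℕ) := (Fin g → ℤ) × (Fin g → ℤ)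

/-- The standard symplectic form `ω((p,q),(p',q')) = Σⱼ (pⱼ q'ⱼ − qⱼ p'ⱼ)`. -/
def symp (g : ℕ) (x y : HVec g) : ℤ := ∑ j, (x.1 j * y.2 j - x.2 j * y.1 j)

lemma symp_add_left (g : ℕ) (x y z : HVec g) :
    symp g (x + y) z = symp g x z + symp g y z := by
  simp only [symp, Prod.fst_add, Prod.snd_add, Pi.add_apply]
  rw [← Finset.sum_add_distrib]
  exact Finset.sum_congr rfl fun j _ => by ring

lemma symp_add_right (g : ℕ) (x y z : HVec g) :
    symp g x (y + z) = symp g x y + symp g x z := by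
  simp only [symp, Prod.fst_add, Prod.snd_add, Pi.add_apply]
  rw [← Finset.sum_add_distrib]
  exact Finset.sum_congr rfl fun j _ => by ring

lemma symp_zero_left (g : ℕ) (y : HVec g) : symp g 0 y = 0 := by
  simp [symp]

lemma symp_zero_right (g : ℕ) (x : HVec g) : symp g x 0 = 0 := by
  simp [symp]

lemma symp_neg_left (g : ℕ) (x y : HVec g) : symp g (-x) y = - symp g x y := by
  simp only [symp, Prod.fst_neg, Prod.snd_neg, Pi.neg_apply, ← Finset.sum_neg_distrib]
  exact Finset.sum_congr rfl fun j _ => by ring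

lemma symp_neg_right (g : ℕ) (x y : HVec g) : symp g x (-y) = - symp g x y := by
  simp only [symp, Prod.fst_neg, Prod.snd_neg, Pi.neg_apply, ← Finset.sum_neg_distrib]
  exact Finset.sum_congr rfl fun j _ => by ring

lemma symp_self (g : ℕ) (x : HVec g) : symp g x x = 0 :=
  Finset.sum_eq_zero fun j _ => by ring

lemma symp_skew (g : ℕ) (x y : HVec g) : symp g x y = - symp g y x := by
  simp only [symp, ← Finset.sum_neg_distrib]
  exact Finset.sum_congr rfl fun j _ => by ring

lemma symp_smul_left (g : ℕ) (c : ℤ) (x y : HVec g) :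
    symp g (c • x) y = c * symp g x y := by
  simp only [symp, Prod.smul_fst, Prod.smul_snd, Pi.smul_apply, smul_eq_mul, Finset.mul_sum]
  exact Finset.sum_congr rfl fun j _ => by ring

lemma symp_smul_right (g : ℕ) (c : ℤ) (x y : HVec g) :
    symp g x (c • y) = c * symp g x y := by
  simp only [symp, Prod.smul_fst, Prod.smul_snd, Pi.smul_apply, smul_eq_mul, Finset.mul_sum]
  exact Finset.sum_congr rfl fun j _ => by ring

/-- The integral Heisenberg group `H(ℤ^g) = ℤ^g × ℤ^g × ℤ`. -/
def Heis (g : ℕ) := HVec g × ℤ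

namespace Heis

variable {g : ℕ}

instance : Mul (Heis g) := ⟨fun a b => (a.1 + b.1, a.2 + b.2 + symp g a.1 b.1)⟩
instance : One (Heis g) := ⟨((0 : HVec g), (0 : ℤ))⟩
instance : Inv (Heis g) := ⟨fun a => (-a.1, -a.2)⟩

lemma mul_def (a b : Heis g) : a * b = (a.1 + b.1, a.2 + b.2 + symp g a.1 b.1) := rfl
lemma one_def : (1 : Heis g) = ((0 : HVec g), (0 : ℤ)) := rfl
lemma inv_def (a : Heis g) : a⁻¹ = (-a.1, -a.2) := rfl

instance : Group (Heis g) where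
  mul_assoc a b c := by
    show ((a.1 + b.1) + c.1, (a.2 + b.2 + symp g a.1 b.1) + c.2 + symp g (a.1 + b.1) c.1) =
      (a.1 + (b.1 + c.1), a.2 + (b.2 + c.2 + symp g b.1 c.1) + symp g a.1 (b.1 + c.1))
    refine Prod.ext ?_ ?_
    · simp [add_assoc]
    · simp only [symp_add_left, symp_add_right]
      ring
  one_mul a := by
    show ((0 : HVec g) + a.1, (0 : ℤ) + a.2 + symp g 0 a.1) = a
    refine Prod.ext ?_ ?_ <;> simp [symp_zero_left]
  mul_one a := by
    show (a.1 + (0 : HVec g), a.2 + (0 : ℤ) + symp g a.1 0) = a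
    refine Prod.ext ?_ ?_ <;> simp [symp_zero_right]
  inv_mul_cancel a := by
    show (-a.1 + a.1, -a.2 + a.2 + symp g (-a.1) a.1) = ((0 : HVec g), (0 : ℤ))
    refine Prod.ext ?_ ?_ <;> simp [symp_neg_left, symp_self]

end Heis

/-- The normal subgroup `Γ_N = {(Np, Nq, 2Nk)}` of `H(ℤ^g)`. -/
def GammaN (g N : ℕ) (hN : Even N) : Subgroup (Heis g) where
  carrier := {a | (∃ x : HVec g, a.1 = (N : ℤ) • x) ∧ ∃ k : ℤ, a.2 = 2 * N * k}
  one_mem' := ⟨⟨0, by simp [Heis.one_def]⟩, 0, by simp [Heis.one_def]⟩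
  mul_mem' := by
    rintro a b ⟨⟨x, hx⟩, k, hk⟩ ⟨⟨y, hy⟩, l, hl⟩
    obtain ⟨m, hm⟩ := hN
    have hNm : (N : ℤ) = m + m := by exact_mod_cast hm
    refine ⟨⟨x + y, ?_⟩, k + l + m * symp g x y, ?_⟩
    · simp [Heis.mul_def, hx, hy, smul_add]
    · simp only [Heis.mul_def, hx, hy, hk, hl, symp_smul_left, symp_smul_right]
      rw [hNm]; ring
  inv_mem' := by
    rintro a ⟨⟨x, hx⟩, k, hk⟩
    exact ⟨⟨-x, by simp [Heis.inv_def, hx]⟩, -k, by simp [Heis.inv_def, hk]⟩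

instance gammaN_normal (g N : ℕ) (hN : Even N) : (GammaN g N hN).Normal := by
  constructor
  intro n hn x
  obtain ⟨⟨y, hy⟩, k, hk⟩ := hn
  refine ⟨⟨y, ?_⟩, k + symp g x.1 y, ?_⟩
  · show x.1 + n.1 + -x.1 = (N : ℤ) • y
    rw [hy]; abel
  · show x.2 + n.2 + symp g x.1 n.1 + -x.2 + symp g (x.1 + n.1) (-x.1) = 2 * N * (k + symp g x.1 y)
    simp only [Heis.mul_def, Heis.inv_def, hy, hk, symp_add_left, symp_neg_right, symp_self,
      symp_smul_left, symp_smul_right]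
    have h1 : symp g y x.1 = - symp g x.1 y := symp_skew g y x.1
    rw [h1]; ring

noncomputable section

/-- The Hilbert space `V` of functions `(ℤ_N)^g → ℂ` with its standard inner product. -/
abbrev ThetaSp (g N : ℕ) [NeZero N] := EuclideanSpace ℂ (Fin g → ZMod N)

/-- The standard orthonormal basis `(e_μ)` of `V`, `μ ∈ (ℤ_N)^g`,
with `e_μ = EuclideanSpace.single μ 1`. -/
def thetaBasis (g N : ℕ) [NeZero N] : Module.Basis (Fin g → ZMod N) ℂ (ThetaSp g N) :=
  (EuclideanSpace.basisFun (Fin g → ZMod N) ℂ).toBasis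

/-- The coefficient `exp(−(πi/N) pᵀq − (2πi/N) μᵀq)`, where `μᵀq` is computed using the
canonical lift `ZMod.val` of `μ` to `ℤ^g`. -/
def schCoeff (g N : ℕ) [NeZero N] (p q : Fin g → ℤ) (μ : Fin g → ZMod N) : ℂ :=
  Complex.exp (-((Real.pi : ℂ) * Complex.I / N) * (∑ j, (p j : ℂ) * (q j : ℂ))
    - (2 * (Real.pi : ℂ) * Complex.I / N) * (∑ j, ((μ j).val : ℂ) * (q j : ℂ)))

/-- The operator `O_{pq}` on `V`, determined by its action on the standard basis:
`O_{pq} e_μ = exp(−(πi/N) pᵀq − (2πi/N) μᵀq) • e_{μ+p}`. -/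
def Opq (g N : ℕ) [NeZero N] (p q : Fin g → ℤ) : ThetaSp g N →L[ℂ] ThetaSp g N :=
  LinearMap.toContinuousLinearMap <|
    (thetaBasis g N).constr ℂ fun μ =>
      schCoeff g N p q μ • EuclideanSpace.single (μ + fun j => ((p j : ZMod N))) (1 : ℂ)

/- ========== Auxiliary development for stmt_6 ========== -/

noncomputable section HJaux

open scoped InnerProductSpace

/-- `exp(π i m / N)` for an integer `m`. -/
noncomputable def ee (N : ℕ) (m : ℤ) : ℂ := Complex.exp (Real.pi * Complex.I / N * m)

lemma ee_add (N : ℕ) (a b : ℤ) : ee N (a + b) = ee N a * ee N b := by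
  rw [ee, ee, ee, ← Complex.exp_add]; congr 1; push_cast; ring

lemma ee_zero (N : ℕ) : ee N 0 = 1 := by simp [ee]

lemma ee_congr (N : ℕ) [NeZero N] {a b : ℤ} (h : (2 * N : ℤ) ∣ a - b) : ee N a = ee N b := by
  obtain ⟨k, hk⟩ := h
  have ha : a = b + 2 * N * k := by linarith
  rw [ha, ee_add]
  have hN : (N : ℂ) ≠ 0 := Nat.cast_ne_zero.mpr (NeZero.ne N)
  have h1 : ee N (2 * N * k) = 1 := by
    rw [ee]
    have : (Real.pi : ℂ) * Complex.I / N * ((2 * N * k : ℤ) : ℂ)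
        = (k : ℂ) * (2 * Real.pi * Complex.I) := by push_cast; field_simp
    rw [this, Complex.exp_int_mul_two_pi_mul_I]
  rw [h1, mul_one]

lemma ee_neg_mul (N : ℕ) (a : ℤ) : ee N a * ee N (-a) = 1 := by
  rw [← ee_add]; simp [ee_zero]

lemma star_ee (N : ℕ) (m : ℤ) : (starRingEnd ℂ) (ee N m) = ee N (-m) := by
  rw [ee, ee, ← Complex.exp_conj]; congr 1
  simp only [map_mul, map_div₀, Complex.conj_I, Complex.conj_ofReal, map_natCast, map_intCast]
  push_cast; ring

set_option linter.unusedSectionVars false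

variable (g N : ℕ) [NeZero N]

/-- reduction mod `N` -/
def redu (p : Fin g → ℤ) : Fin g → ZMod N := fun j => (p j : ZMod N)

/-- canonical lift -/
def lft (μ : Fin g → ZMod N) : Fin g → ℤ := fun j => ((μ j).val : ℤ)

/-- integer dot product -/
def dotP (a b : Fin g → ℤ) : ℤ := ∑ j, a j * b j

lemma redu_lft (μ : Fin g → ZMod N) : redu g N (lft g N μ) = μ := by
  funext j
  simp [redu, lft, ZMod.natCast_val, ZMod.intCast_cast, ZMod.cast_id]

lemma redu_add (a b : Fin g → ℤ) : redu g N (a + b) = redu g N a + redu g N b := by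
  funext j; simp [redu]

lemma redu_sub (a b : Fin g → ℤ) : redu g N (a - b) = redu g N a - redu g N b := by
  funext j; simp [redu]

lemma redu_neg (a : Fin g → ℤ) : redu g N (-a) = -(redu g N a) := by
  funext j; simp [redu]

lemma redu_zero : redu g N 0 = 0 := by funext j; simp [redu]

lemma lft_zero : lft g N 0 = 0 := by funext j; simp [lft]

lemma dvd_lift_add (m : ℤ) (a : ZMod N) :
    (N : ℤ) ∣ (m + (a.val : ℤ) - (((a + (m : ZMod N)).val : ℤ))) := by
  rw [← ZMod.intCast_zmod_eq_zero_iff_dvd]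
  push_cast
  simp only [ZMod.natCast_val, ZMod.intCast_cast, ZMod.cast_id]
  ring

lemma dvd_sub_lift (p : Fin g → ℤ) (j : Fin g) :
    (N : ℤ) ∣ (p j - lft g N (redu g N p) j) := by
  rw [← ZMod.intCast_zmod_eq_zero_iff_dvd]
  push_cast
  simp [lft, redu, ZMod.natCast_val, ZMod.intCast_cast, ZMod.cast_id]

lemma schCoeff_eq (p q : Fin g → ℤ) (μ : Fin g → ZMod N) :
    schCoeff g N p q μ = ee N (-(dotP g p q + 2 * dotP g (lft g N μ) q)) := by
  rw [schCoeff, ee]; congr 1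
  push_cast [dotP, lft]
  simp only [Finset.mul_sum, neg_add, neg_mul, mul_neg, mul_add, ← Finset.sum_neg_distrib,
    ← Finset.sum_add_distrib, ← Finset.sum_sub_distrib]
  exact Finset.sum_congr rfl fun j _ => by ring

/-- basis vector -/
def sgl (μ : Fin g → ZMod N) : ThetaSp g N := EuclideanSpace.single μ 1

/-- `O_x` for `x : HVec g`. -/
def Op (x : HVec g) : ThetaSp g N →L[ℂ] ThetaSp g N := Opq g N x.1 x.2

lemma thetaBasis_eq (μ : Fin g → ZMod N) : thetaBasis g N μ = sgl g N μ := by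
  simp [thetaBasis, sgl, EuclideanSpace.basisFun_apply]

lemma Op_single (x : HVec g) (μ : Fin g → ZMod N) :
    Op g N x (sgl g N μ) =
      ee N (-(dotP g x.1 x.2 + 2 * dotP g (lft g N μ) x.2)) • sgl g N (μ + redu g N x.1) := by
  rw [← schCoeff_eq, ← thetaBasis_eq, Op, Opq]
  simp only [LinearMap.coe_toContinuousLinearMap']
  rw [Module.Basis.constr_basis]
  rfl

lemma clm_ext {T S : ThetaSp g N →L[ℂ] ThetaSp g N}
    (h : ∀ μ, T (sgl g N μ) = S (sgl g N μ)) : T = S := by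
  apply ContinuousLinearMap.coe_injective
  apply Module.Basis.ext (thetaBasis g N)
  intro μ
  simpa only [thetaBasis_eq, ContinuousLinearMap.coe_coe] using h μ

lemma Op_mul (x y : HVec g) :
    Op g N x * Op g N y = ee N (symp g x y) • Op g N (x + y) := by
  apply clm_ext; intro μ
  rw [ContinuousLinearMap.mul_apply, ContinuousLinearMap.smul_apply]
  rw [Op_single, map_smul, Op_single, Op_single, smul_smul, smul_smul]
  have hidx : (μ + redu g N y.1) + redu g N x.1 = μ + redu g N (x + y).1 := by
    have : (x + y).1 = x.1 + y.1 := rfl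
    rw [this, redu_add]; abel
  rw [hidx]
  congr 1
  rw [← ee_add, ← ee_add]
  apply ee_congr
  have hcomp : ∀ j, (N:ℤ) ∣ (y.1 j + lft g N μ j - lft g N (μ + redu g N y.1) j) := by
    intro j
    have := dvd_lift_add N (y.1 j) (μ j)
    simpa [lft, redu, add_comm] using this
  have heq : (-(dotP g y.1 y.2 + 2 * dotP g (lft g N μ) y.2) +
        -(dotP g x.1 x.2 + 2 * dotP g (lft g N (μ + redu g N y.1)) x.2)) -
      (symp g x y + -(dotP g (x + y).1 (x + y).2 + 2 * dotP g (lft g N μ) (x + y).2))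
      = ∑ j, 2 * ((y.1 j + lft g N μ j - lft g N (μ + redu g N y.1) j) * x.2 j) := by
    simp only [symp, dotP, Prod.fst_add, Prod.snd_add, Pi.add_apply, Finset.mul_sum, neg_add,
      ← Finset.sum_neg_distrib, ← Finset.sum_add_distrib, ← Finset.sum_sub_distrib]
    exact Finset.sum_congr rfl fun j _ => by ring
  rw [heq]
  refine Finset.dvd_sum fun j _ => ?_
  obtain ⟨c, hc⟩ := hcomp j
  exact ⟨c * x.2 j, by rw [hc]; ring⟩

lemma Op_zero' : Op g N 0 = 1 := by
  apply clm_ext; intro μ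
  rw [ContinuousLinearMap.one_apply, Op_single]
  have h1 : dotP g (0 : HVec g).1 (0 : HVec g).2 = 0 := by
    simp [dotP]
  have h2 : dotP g (lft g N μ) (0 : HVec g).2 = 0 := by
    simp [dotP]
  have h3 : redu g N (0 : HVec g).1 = 0 := by funext j; simp [redu]
  rw [h1, h2, h3, add_zero]
  norm_num [ee_zero]

lemma Op_smulN (hN : Even N) (v : HVec g) : Op g N ((N:ℤ) • v) = 1 := by
  apply clm_ext; intro μ
  rw [ContinuousLinearMap.one_apply, Op_single]
  have hr : redu g N ((N:ℤ) • v).1 = 0 := by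
    funext j
    simp [redu, Prod.smul_fst]
  rw [hr, add_zero]
  have hee : ee N (-(dotP g ((N:ℤ)•v).1 ((N:ℤ)•v).2 + 2 * dotP g (lft g N μ) ((N:ℤ)•v).2)) = 1 := by
    rw [← ee_zero N]
    apply ee_congr
    obtain ⟨m, hm⟩ := hN
    have hNm : (N:ℤ) = (m:ℤ) + (m:ℤ) := by exact_mod_cast hm
    have heq : (-(dotP g ((N:ℤ)•v).1 ((N:ℤ)•v).2 + 2 * dotP g (lft g N μ) ((N:ℤ)•v).2)) - 0
        = ∑ j, (-(((N:ℤ)*v.1 j) * ((N:ℤ)*v.2 j)) - 2 * (lft g N μ j * ((N:ℤ)*v.2 j))) := by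
      simp only [dotP, Prod.smul_fst, Prod.smul_snd, Pi.smul_apply, smul_eq_mul, Finset.mul_sum,
        neg_add, sub_zero, ← Finset.sum_neg_distrib, ← Finset.sum_add_distrib,
        ← Finset.sum_sub_distrib]
      exact Finset.sum_congr rfl fun j _ => by ring
    rw [heq]
    refine Finset.dvd_sum fun j _ => ?_
    refine ⟨-((m:ℤ) * v.1 j * v.2 j) - lft g N μ j * v.2 j, ?_⟩
    rw [hNm]; ring
  rw [hee, one_smul]

lemma inner_sgl (μ ν : Fin g → ZMod N) :
    ⟪sgl g N μ, sgl g N ν⟫_ℂ = if μ = ν then 1 else 0 := by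
  rw [sgl, sgl, EuclideanSpace.inner_single_left]
  simp [EuclideanSpace.single_apply, eq_comm]

lemma Op_inner (x : HVec g) (u v : ThetaSp g N) :
    ⟪Op g N x u, Op g N x v⟫_ℂ = ⟪u, v⟫_ℂ := by
  have key : ∀ μ ν, ⟪Op g N x (sgl g N μ), Op g N x (sgl g N ν)⟫_ℂ
      = ⟪sgl g N μ, sgl g N ν⟫_ℂ := by
    intro μ ν
    rw [Op_single, Op_single, inner_smul_left, inner_smul_right, inner_sgl, inner_sgl]
    by_cases hmn : μ = ν
    · subst hmn
      rw [if_pos rfl, if_pos rfl, mul_one, star_ee, ← ee_add, neg_add_cancel, ee_zero]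
    · have h2 : ¬ (μ + redu g N x.1 = ν + redu g N x.1) := by simpa using hmn
      simp [hmn, h2]
  have key' : ∀ μ ν : Fin g → ZMod N, ⟪Op g N x (EuclideanSpace.single μ 1),
      Op g N x (EuclideanSpace.single ν 1)⟫_ℂ
      = ⟪(EuclideanSpace.single μ 1 : ThetaSp g N), EuclideanSpace.single ν 1⟫_ℂ :=
    fun μ ν => key μ ν
  have hu := (EuclideanSpace.basisFun (Fin g → ZMod N) ℂ).sum_repr u
  have hv := (EuclideanSpace.basisFun (Fin g → ZMod N) ℂ).sum_repr v
  conv_lhs => rw [← hu, ← hv]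
  conv_rhs => rw [← hu, ← hv]
  simp only [map_sum, map_smul, inner_sum, sum_inner, inner_smul_left, inner_smul_right,
    EuclideanSpace.basisFun_apply]
  simp only [key']

lemma ee_smul_cancel {M : Type*} [AddCommMonoid M] [Module ℂ M] (a : ℤ) {T S : M}
    (hTS : T = ee N a • S) : S = ee N (-a) • T := by
  rw [hTS, smul_smul, ← ee_add, neg_add_cancel, ee_zero, one_smul]

variable (h : HVec g ≃+ HVec g)

/-- the conjugated operators -/
def Wop (x : HVec g) : ThetaSp g N →L[ℂ] ThetaSp g N := Op g N (h x)

lemma W_mul (hsymp : ∀ x y : HVec g, symp g (h x) (h y) = symp g x y) (x y : HVec g) :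
    Wop g N h x * Wop g N h y = ee N (symp g x y) • Wop g N h (x + y) := by
  rw [Wop, Wop, Wop, Op_mul, ← map_add, hsymp]

lemma W_zero : Wop g N h 0 = 1 := by rw [Wop, map_zero, Op_zero']

lemma W_smulN (hNeven : Even N) (v : HVec g) : Wop g N h ((N:ℤ) • v) = 1 := by
  rw [Wop, map_zsmul, Op_smulN _ _ hNeven]

lemma W_shift (hsymp : ∀ x y : HVec g, symp g (h x) (h y) = symp g x y) (hNeven : Even N)
    (x v : HVec g) :
    Wop g N h (x + (N:ℤ) • v) = ee N ((N:ℤ) * symp g v x) • Wop g N h x := by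
  have h1 := W_mul g N h hsymp x ((N:ℤ) • v)
  rw [W_smulN g N h hNeven v, mul_one, symp_smul_right] at h1
  rw [ee_smul_cancel (M := ThetaSp g N →L[ℂ] ThetaSp g N) N _ h1]
  congr 1
  rw [symp_skew g v x]; ring

lemma W_inv_apply (hsymp : ∀ x y : HVec g, symp g (h x) (h y) = symp g x y) (x : HVec g)
    (w : ThetaSp g N) : Wop g N h x (Wop g N h (-x) w) = w := by
  have h1 := W_mul g N h hsymp x (-x)
  rw [symp_neg_right, symp_self, neg_zero, ee_zero, add_neg_cancel, W_zero, one_smul] at h1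
  have := congrArg (fun T : ThetaSp g N →L[ℂ] ThetaSp g N => T w) h1
  simpa using this

lemma W_adj (hsymp : ∀ x y : HVec g, symp g (h x) (h y) = symp g x y) (x : HVec g)
    (u w : ThetaSp g N) : ⟪Wop g N h x u, w⟫_ℂ = ⟪u, Wop g N h (-x) w⟫_ℂ := by
  conv_lhs => rw [← W_inv_apply g N h hsymp x w]
  exact Op_inner g N (h x) u _

/-- `A_μ` -/
def Aop (μ : Fin g → ZMod N) : ThetaSp g N →L[ℂ] ThetaSp g N := Wop g N h (lft g N μ, 0)

lemma Aop_zero : Aop g N h 0 = 1 := by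
  rw [Aop, lft_zero]
  exact W_zero g N h

lemma W_fst (hsymp : ∀ x y : HVec g, symp g (h x) (h y) = symp g x y) (hNeven : Even N)
    (p : Fin g → ℤ) : Wop g N h (p, 0) = Aop g N h (redu g N p) := by
  have hd : ∀ j, ∃ c : ℤ, p j - lft g N (redu g N p) j = N * c := by
    intro j; exact (dvd_sub_lift g N p j).imp fun c hc => hc
  choose d hdj using hd
  have hx : ((p, 0) : HVec g) = ((lft g N (redu g N p), 0) : HVec g) + (N:ℤ) • (d, 0) := by
    refine Prod.ext ?_ ?_
    · funext j
      have := hdj j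
      simp only [Prod.fst_add, Prod.smul_fst, Pi.add_apply, Pi.smul_apply, smul_eq_mul]
      linarith
    · simp
  rw [hx, W_shift g N h hsymp hNeven]
  have hs : symp g ((d, 0) : HVec g) ((lft g N (redu g N p), 0) : HVec g) = 0 :=
    Finset.sum_eq_zero fun j _ => by simp
  rw [hs, mul_zero, ee_zero, one_smul, Aop]

lemma W_snd (hsymp : ∀ x y : HVec g, symp g (h x) (h y) = symp g x y) (hNeven : Even N)
    (b : Fin g → ℤ) : Wop g N h (0, b) = Wop g N h (0, lft g N (redu g N b)) := by
  have hd : ∀ j, ∃ c : ℤ, b j - lft g N (redu g N b) j = N * c := by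
    intro j; exact (dvd_sub_lift g N b j).imp fun c hc => hc
  choose d hdj using hd
  have hx : ((0, b) : HVec g) = ((0, lft g N (redu g N b)) : HVec g) + (N:ℤ) • (0, d) := by
    refine Prod.ext ?_ ?_
    · simp
    · funext j
      have := hdj j
      simp only [Prod.snd_add, Prod.smul_snd, Pi.add_apply, Pi.smul_apply, smul_eq_mul]
      linarith
  rw [hx, W_shift g N h hsymp hNeven]
  have hs : symp g ((0, d) : HVec g) ((0, lft g N (redu g N b)) : HVec g) = 0 :=
    Finset.sum_eq_zero fun j _ => by simp
  rw [hs, mul_zero, ee_zero, one_smul]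

/-- the averaging sum -/
def Sop : ThetaSp g N →L[ℂ] ThetaSp g N := ∑ q : Fin g → ZMod N, Wop g N h (0, lft g N q)

/-- the averaging projection -/
def Pop : ThetaSp g N →L[ℂ] ThetaSp g N := ((N:ℂ)^g)⁻¹ • Sop g N h

lemma hcardC : ((Fintype.card (Fin g → ZMod N) : ℕ) : ℂ) = (N:ℂ)^g := by
  rw [Fintype.card_fun, ZMod.card, Fintype.card_fin]
  push_cast; ring

lemma NgC_ne : ((N:ℂ)^g) ≠ 0 :=
  pow_ne_zero _ (Nat.cast_ne_zero.mpr (NeZero.ne N))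

lemma key3 (hsymp : ∀ x y : HVec g, symp g (h x) (h y) = symp g x y) (hNeven : Even N)
    (b : Fin g → ℤ) : Wop g N h (0, b) * Sop g N h = Sop g N h := by
  rw [W_snd g N h hsymp hNeven, Sop, Finset.mul_sum]
  have hterm : ∀ q : Fin g → ZMod N,
      Wop g N h (0, lft g N (redu g N b)) * Wop g N h (0, lft g N q)
      = Wop g N h (0, lft g N (redu g N b + q)) := by
    intro q
    rw [W_mul g N h hsymp]
    have hsy : symp g ((0, lft g N (redu g N b)) : HVec g) ((0, lft g N q) : HVec g) = 0 :=
      Finset.sum_eq_zero fun j _ => by simp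
    rw [hsy, ee_zero, one_smul]
    have hadd : ((0, lft g N (redu g N b)) : HVec g) + (0, lft g N q)
        = (0, lft g N (redu g N b) + lft g N q) := by
      refine Prod.ext ?_ ?_ <;> simp
    rw [hadd, W_snd g N h hsymp hNeven, redu_add, redu_lft, redu_lft]
  simp_rw [hterm]
  exact Fintype.sum_equiv (Equiv.addLeft (redu g N b)) _ _ (fun q => rfl)

lemma key3P (hsymp : ∀ x y : HVec g, symp g (h x) (h y) = symp g x y) (hNeven : Even N)
    (b : Fin g → ℤ) : Wop g N h (0, b) * Pop g N h = Pop g N h := by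
  rw [Pop, mul_smul_comm, key3 g N h hsymp hNeven]

lemma P_idem (hsymp : ∀ x y : HVec g, symp g (h x) (h y) = symp g x y) (hNeven : Even N) :
    Pop g N h * Pop g N h = Pop g N h := by
  have hS : Sop g N h * Pop g N h = ((N:ℂ)^g) • Pop g N h := by
    rw [Sop, Finset.sum_mul]
    have : ∀ q : Fin g → ZMod N, Wop g N h (0, lft g N q) * Pop g N h = Pop g N h :=
      fun q => key3P g N h hsymp hNeven _
    simp_rw [this]
    rw [Finset.sum_const, Finset.card_univ, ← Nat.cast_smul_eq_nsmul ℂ, hcardC]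
  calc Pop g N h * Pop g N h = ((N:ℂ)^g)⁻¹ • (Sop g N h * Pop g N h) := by
        rw [Pop, smul_mul_assoc]
    _ = ((N:ℂ)^g)⁻¹ • (((N:ℂ)^g) • Pop g N h) := by rw [hS]
    _ = Pop g N h := by rw [smul_smul, inv_mul_cancel₀ (NgC_ne g N), one_smul]

set_option maxHeartbeats 1000000 in
lemma P_adj (hsymp : ∀ x y : HVec g, symp g (h x) (h y) = symp g x y) (hNeven : Even N)
    (u w : ThetaSp g N) : ⟪Pop g N h u, w⟫_ℂ = ⟪u, Pop g N h w⟫_ℂ := by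
  rw [Pop]
  simp only [ContinuousLinearMap.smul_apply, inner_smul_left, inner_smul_right, Sop,
    ContinuousLinearMap.sum_apply, sum_inner, inner_sum]
  have hc : (starRingEnd ℂ) (((N:ℂ)^g)⁻¹) = ((N:ℂ)^g)⁻¹ := by
    simp [map_inv₀, map_pow]
  rw [hc]
  congr 1
  have hterm : ∀ q : Fin g → ZMod N,
      ⟪Wop g N h (0, lft g N q) u, w⟫_ℂ = ⟪u, Wop g N h (0, lft g N (-q)) w⟫_ℂ := by
    intro q
    rw [W_adj g N h hsymp]
    congr 2
    have hneg : (-((0, lft g N q) : HVec g)) = ((0, -(lft g N q)) : HVec g) := by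
      refine Prod.ext ?_ ?_ <;> simp
    rw [hneg]
    rw [W_snd g N h hsymp hNeven, redu_neg, redu_lft]
  simp_rw [hterm]
  exact Fintype.sum_equiv (Equiv.neg _) _ _ (fun q => by simp)

lemma key2 (hsymp : ∀ x y : HVec g, symp g (h x) (h y) = symp g x y) (hNeven : Even N)
    (x : HVec g) (μ : Fin g → ZMod N) :
    Wop g N h x * (Aop g N h μ * Pop g N h)
      = schCoeff g N x.1 x.2 μ • (Aop g N h (μ + redu g N x.1) * Pop g N h) := by
  rw [← mul_assoc]
  have h1 : Wop g N h x * Aop g N h μ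
      = ee N (symp g x (lft g N μ, 0)) • Wop g N h (x.1 + lft g N μ, x.2) := by
    rw [Aop, W_mul g N h hsymp]
    congr 2
    refine Prod.ext ?_ ?_ <;> simp
  have hab : ((x.1 + lft g N μ, 0) : HVec g) + (0, x.2) = (x.1 + lft g N μ, x.2) := by
    refine Prod.ext ?_ ?_ <;> simp
  have h2' := W_mul g N h hsymp ((x.1 + lft g N μ, 0) : HVec g) ((0, x.2) : HVec g)
  rw [hab] at h2'
  have h2 := ee_smul_cancel (M := ThetaSp g N →L[ℂ] ThetaSp g N) N _ h2'
  rw [h1, smul_mul_assoc, h2, smul_mul_assoc, smul_smul, mul_assoc, key3P g N h hsymp hNeven,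
    W_fst g N h hsymp hNeven, redu_add, redu_lft, add_comm (redu g N x.1) μ]
  congr 1
  rw [← ee_add, schCoeff_eq]
  congr 1
  have : symp g x (lft g N μ, 0) = -(dotP g x.2 (lft g N μ)) := by
    rw [symp, dotP, ← Finset.sum_neg_distrib]
    exact Finset.sum_congr rfl fun j _ => by simp
  rw [this]
  have : symp g ((x.1 + lft g N μ, 0) : HVec g) ((0, x.2) : HVec g)
      = dotP g x.1 x.2 + dotP g (lft g N μ) x.2 := by
    rw [symp, dotP, dotP, ← Finset.sum_add_distrib]
    exact Finset.sum_congr rfl fun j _ => by simp [Pi.add_apply]; ring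
  rw [this]
  have hcm : dotP g x.2 (lft g N μ) = dotP g (lft g N μ) x.2 := by
    rw [dotP, dotP]; exact Finset.sum_congr rfl fun j _ => mul_comm _ _
  rw [hcm]; ring

lemma eeN_dvd_iff (hN1 : 1 < N) (a : ℤ) (hee : ee N (2 * a) = 1) : (N:ℤ) ∣ a := by
  rw [ee, Complex.exp_eq_one_iff] at hee
  obtain ⟨n, hn⟩ := hee
  have hπ : (Real.pi : ℂ) ≠ 0 := by exact_mod_cast Real.pi_ne_zero
  have hI := Complex.I_ne_zero
  have hNne : (N:ℂ) ≠ 0 := Nat.cast_ne_zero.mpr (NeZero.ne N)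
  have hc2 : ((a : ℂ)) = ((n * N : ℤ) : ℂ) := by
    push_cast at hn ⊢
    field_simp at hn
    have key : ((2:ℂ) * Real.pi * Complex.I) * (a:ℂ)
        = ((2:ℂ) * Real.pi * Complex.I) * ((n:ℂ) * (N:ℂ)) := by linear_combination (2 * (Real.pi : ℂ) * Complex.I) * hn
    exact mul_left_cancel₀ (mul_ne_zero (mul_ne_zero two_ne_zero hπ) hI) key
  have ha : a = n * N := by exact_mod_cast hc2
  exact ⟨n, by rw [ha, mul_comm]⟩

lemma charSum (hN1 : 1 < N) (c : Fin g → ℤ) (j₀ : Fin g) (hc : ¬ (N:ℤ) ∣ c j₀) :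
    ∑ q : Fin g → ZMod N, ee N (2 * ∑ j, ((q j).val : ℤ) * c j) = 0 := by
  haveI : Fact (1 < N) := ⟨hN1⟩
  set χ : (Fin g → ZMod N) → ℂ := fun q => ee N (2 * ∑ j, ((q j).val : ℤ) * c j) with hχ
  have hom : ∀ a q, χ (a + q) = χ a * χ q := by
    intro a q
    rw [hχ]; dsimp only
    rw [← ee_add]
    apply ee_congr
    have heq : (2 * ∑ j, (((a+q) j).val : ℤ) * c j) -
        (2 * ∑ j, ((a j).val:ℤ) * c j + 2 * ∑ j, ((q j).val:ℤ) * c j)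
        = ∑ j, 2 * (((((a j) + (q j)).val:ℤ) - ((a j).val:ℤ) - ((q j).val:ℤ)) * c j) := by
      simp only [Pi.add_apply, Finset.mul_sum, ← Finset.sum_add_distrib, ← Finset.sum_sub_distrib]
      exact Finset.sum_congr rfl fun j _ => by ring
    rw [heq]
    refine Finset.dvd_sum fun j _ => ?_
    have hd : (N:ℤ) ∣ ((((a j) + (q j)).val:ℤ) - ((a j).val:ℤ) - ((q j).val:ℤ)) := by
      rw [← ZMod.intCast_zmod_eq_zero_iff_dvd]
      push_cast
      simp only [ZMod.natCast_val, ZMod.intCast_cast, ZMod.cast_id]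
      ring
    obtain ⟨d, hd⟩ := hd
    exact ⟨d * c j, by rw [hd]; ring⟩
  have hχa : χ (Pi.single j₀ 1) = ee N (2 * c j₀) := by
    rw [hχ]; dsimp only
    congr 2
    rw [Finset.sum_eq_single j₀]
    · simp [Pi.single_eq_same, ZMod.val_one]
    · intro b _ hb
      simp [Pi.single_eq_of_ne hb]
    · intro hj; exact absurd (Finset.mem_univ j₀) hj
  have hne : χ (Pi.single j₀ 1) ≠ 1 := by
    rw [hχa]
    intro heq
    exact hc (eeN_dvd_iff N hN1 (c j₀) heq)
  have hsum : χ (Pi.single j₀ 1) * ∑ q, χ q = ∑ q, χ q := by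
    rw [Finset.mul_sum]
    have : ∀ q, χ (Pi.single j₀ 1) * χ q = χ (Pi.single j₀ 1 + q) := fun q => (hom _ q).symm
    simp_rw [this]
    exact Fintype.sum_equiv (Equiv.addLeft (Pi.single j₀ 1)) _ _ (fun q => rfl)
  have hz : (χ (Pi.single j₀ 1) - 1) * ∑ q, χ q = 0 := by
    rw [sub_mul, one_mul, hsum, sub_self]
  rcases mul_eq_zero.mp hz with h1 | h2
  · exact absurd (sub_eq_zero.mp h1) hne
  · exact h2

lemma oneLtN (hNeven : Even N) : 1 < N := by
  obtain ⟨m, hm⟩ := hNeven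
  have := NeZero.ne N
  omega

/-- trace functional -/
def trc (T : ThetaSp g N →L[ℂ] ThetaSp g N) : ℂ := ∑ μ, ⟪sgl g N μ, T (sgl g N μ)⟫_ℂ

lemma trc_one : trc g N 1 = (N:ℂ)^g := by
  rw [trc]
  have hterm : ∀ μ : Fin g → ZMod N,
      ⟪sgl g N μ, (1 : ThetaSp g N →L[ℂ] ThetaSp g N) (sgl g N μ)⟫_ℂ = 1 := fun μ => by
    rw [ContinuousLinearMap.one_apply, inner_sgl, if_pos rfl]
  simp_rw [hterm]
  rw [Finset.sum_const, Finset.card_univ, nsmul_eq_mul, mul_one, hcardC]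

lemma trc_zero : trc g N 0 = 0 := by
  simp [trc]

lemma trc_sum {ι : Type*} (s : Finset ι) (T : ι → (ThetaSp g N →L[ℂ] ThetaSp g N)) :
    trc g N (∑ i ∈ s, T i) = ∑ i ∈ s, trc g N (T i) := by
  rw [trc]
  simp_rw [ContinuousLinearMap.sum_apply, inner_sum]
  rw [Finset.sum_comm]
  rfl

lemma trc_Op_fst (x : HVec g) (hx : redu g N x.1 ≠ 0) : trc g N (Op g N x) = 0 := by
  rw [trc]
  refine Finset.sum_eq_zero fun μ _ => ?_
  rw [Op_single, inner_smul_right, inner_sgl, if_neg, mul_zero]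
  intro hcon
  exact hx (by simpa [eq_comm, left_eq_add] using hcon)

lemma trc_Op_snd (hNeven : Even N) (x : HVec g) (hx1 : redu g N x.1 = 0) (j₀ : Fin g)
    (hx2 : ¬ (N:ℤ) ∣ x.2 j₀) : trc g N (Op g N x) = 0 := by
  rw [trc]
  have hterm : ∀ μ : Fin g → ZMod N, ⟪sgl g N μ, Op g N x (sgl g N μ)⟫_ℂ
      = ee N (-(dotP g x.1 x.2)) * ee N (2 * ∑ j, ((μ j).val : ℤ) * (-(x.2 j))) := by
    intro μ
    rw [Op_single, hx1, add_zero, inner_smul_right, inner_sgl, if_pos rfl, mul_one, ← ee_add]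
    congr 1
    have hb : ∑ j, ((μ j).val:ℤ) * (-(x.2 j)) = -(dotP g (lft g N μ) x.2) := by
      rw [dotP, ← Finset.sum_neg_distrib]
      exact Finset.sum_congr rfl fun j _ => by simp only [lft]; ring
    rw [hb]; ring
  simp_rw [hterm]
  rw [← Finset.mul_sum, charSum g N (oneLtN N hNeven) _ j₀ (by rwa [dvd_neg]), mul_zero]

lemma Ndvd_val_iff (a : ZMod N) (hd : (N:ℤ) ∣ -((a.val : ℤ))) : a = 0 := by
  rw [dvd_neg, Int.natCast_dvd_natCast] at hd
  have hlt := ZMod.val_lt a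
  have : a.val = 0 := by
    rcases Nat.eq_zero_or_pos a.val with h0 | hpos
    · exact h0
    · exact absurd (Nat.le_of_dvd hpos hd) (by omega)
  exact (ZMod.val_eq_zero _).mp this

lemma trc_S (hsymp : ∀ x y : HVec g, symp g (h x) (h y) = symp g x y) (hNeven : Even N) :
    trc g N (Sop g N h) = (N:ℂ)^g := by
  rw [Sop, trc_sum]
  rw [Finset.sum_eq_single (0 : Fin g → ZMod N)]
  · rw [lft_zero, Prod.mk_zero_zero, Wop, map_zero, Op_zero', trc_one]
  · intro q _ hq0
    set x := h ((0, lft g N q) : HVec g) with hxdef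
    rw [show Wop g N h ((0, lft g N q) : HVec g) = Op g N x from rfl]
    by_cases hfst : redu g N x.1 = 0
    · -- second component must be nonzero mod N somewhere
      have hsnd : ∃ j, ¬ (N:ℤ) ∣ x.2 j := by
        by_contra hcon
        push_neg at hcon
        have hfst' : ∀ j, (N:ℤ) ∣ x.1 j := by
          intro j
          have hz : ((x.1 j : ℤ) : ZMod N) = 0 := by simpa [redu] using congrFun hfst j
          exact (ZMod.intCast_zmod_eq_zero_iff_dvd _ N).mp hz
        choose a ha using fun j => hfst' j
        choose b hb using fun j => hcon j
        have hx : x = (N:ℤ) • ((a, b) : HVec g) := by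
          refine Prod.ext ?_ ?_ <;> funext j
          · simpa [Prod.smul_fst, mul_comm] using ha j
          · simpa [Prod.smul_snd, mul_comm] using hb j
        have hsymm : ((0, lft g N q) : HVec g) = (N:ℤ) • h.symm ((a, b) : HVec g) := by
          rw [← map_zsmul, ← hx, hxdef, AddEquiv.symm_apply_apply]
        have hlq : ∀ j, lft g N q j = (N:ℤ) * (h.symm ((a, b) : HVec g)).2 j := by
          intro j
          have := congrArg Prod.snd hsymm
          exact congrFun this j
        apply hq0
        funext j
        have hcast : ((lft g N q j : ℤ) : ZMod N) = q j := congrFun (redu_lft g N q) j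
        rw [hlq j] at hcast
        rw [← hcast]
        push_cast
        simp [ZMod.natCast_self]
      obtain ⟨j₀, hj₀⟩ := hsnd
      exact trc_Op_snd g N hNeven x hfst j₀ hj₀
    · exact trc_Op_fst g N x hfst
  · intro hmem; exact absurd (Finset.mem_univ _) hmem

set_option synthInstance.maxHeartbeats 400000 in
lemma PG (hsymp : ∀ x y : HVec g, symp g (h x) (h y) = symp g x y) (hNeven : Even N)
    (κ : Fin g → ZMod N) :
    Pop g N h * (Aop g N h κ * Pop g N h) = (if κ = 0 then (1:ℂ) else 0) • Pop g N h := by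
  by_cases hκ : κ = 0
  · subst hκ
    rw [Aop_zero, one_mul, P_idem g N h hsymp hNeven, if_pos rfl, one_smul]
  · rw [if_neg hκ, zero_smul ℂ (Pop g N h)]
    have hterm : ∀ q : Fin g → ZMod N,
        Wop g N h ((0, lft g N q) : HVec g) * (Aop g N h κ * Pop g N h)
        = ee N (2 * ∑ j, ((q j).val:ℤ) * (-(lft g N κ j))) • (Aop g N h κ * Pop g N h) := by
      intro q
      rw [key2 g N h hsymp hNeven ((0, lft g N q) : HVec g) κ]
      have hidx : κ + redu g N ((0, lft g N q) : HVec g).1 = κ := by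
        rw [show ((0, lft g N q) : HVec g).1 = 0 from rfl, redu_zero, add_zero]
      rw [hidx, schCoeff_eq]
      congr 2
      have h0 : dotP g ((0, lft g N q) : HVec g).1 ((0, lft g N q) : HVec g).2 = 0 := by
        rw [dotP]
        exact Finset.sum_eq_zero fun j _ => by simp
      rw [h0]
      have hb : ∑ j, ((q j).val:ℤ) * (-(lft g N κ j))
          = -(dotP g (lft g N κ) ((0, lft g N q) : HVec g).2) := by
        rw [dotP, ← Finset.sum_neg_distrib]
        exact Finset.sum_congr rfl fun j _ => by simp only [lft]; ring
      rw [hb]; ring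
    have hSsum : Sop g N h * (Aop g N h κ * Pop g N h) = 0 := by
      rw [Sop, Finset.sum_mul]
      simp_rw [hterm]
      rw [← Finset.sum_smul]
      obtain ⟨j₀, hj₀⟩ := Function.ne_iff.mp hκ
      rw [charSum g N (oneLtN N hNeven) _ j₀ ?_, zero_smul]
      intro hdvd
      exact hj₀ (Ndvd_val_iff N (κ j₀) hdvd)
    nth_rewrite 1 [Pop]
    rw [smul_mul_assoc, hSsum]
    ext u
    simp

end HJaux

open scoped InnerProductSpace in
/-- **Existence of the Hermite–Jacobi action via the exact Egorov identity.** For any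
automorphism `h` of `ℤ^g × ℤ^g` preserving the standard symplectic form there is a unitary
operator `ρ(h)` on `V` with `ρ(h) ∘ O_{pq} ∘ ρ(h)⁻¹ = O_{h(p,q)}` for all `p, q ∈ ℤ^g`. -/
theorem stmt_6 (g N : ℕ) [NeZero N] (hN : Even N)
    (h : HVec g ≃+ HVec g)
    (hsymp : ∀ x y : HVec g, symp g (h x) (h y) = symp g x y) :
    ∃ U : ThetaSp g N ≃ₗᵢ[ℂ] ThetaSp g N,
      ∀ (p q : Fin g → ℤ) (f : ThetaSp g N),
        U (Opq g N p q (U.symm f)) = Opq g N (h (p, q)).1 (h (p, q)).2 f := by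
  classical
  have hSne : Sop g N h ≠ 0 := by
    intro h0
    have htr := trc_S g N h hsymp hN
    rw [h0, trc_zero] at htr
    exact NgC_ne g N htr.symm
  have hexu : ∃ u : ThetaSp g N, Sop g N h u ≠ 0 := by
    by_contra hu
    push_neg at hu
    exact hSne (ContinuousLinearMap.ext fun u => by
      rw [hu u, ContinuousLinearMap.zero_apply])
  obtain ⟨u, hSu⟩ := hexu
  set f' : ThetaSp g N := Pop g N h u with hf'def
  have hf'ne : f' ≠ 0 := by
    rw [hf'def, Pop, ContinuousLinearMap.smul_apply]
    exact smul_ne_zero (inv_ne_zero (NgC_ne g N)) hSu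
  have hPf' : Pop g N h f' = f' := by
    have hP2 := congrArg (fun T : ThetaSp g N →L[ℂ] ThetaSp g N => T u)
      (P_idem g N h hsymp hN)
    simpa [ContinuousLinearMap.mul_apply] using hP2
  set f : ThetaSp g N := ((‖f'‖ : ℝ) : ℂ)⁻¹ • f' with hfdef
  have hPf : Pop g N h f = f := by rw [hfdef, map_smul, hPf']
  have hnf' : ‖f'‖ ≠ 0 := norm_ne_zero_iff.mpr hf'ne
  have hnfC : ((‖f'‖ : ℝ) : ℂ) ≠ 0 := by exact_mod_cast hnf'
  have hff : ⟪f, f⟫_ℂ = 1 := by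
    rw [hfdef, inner_smul_left, inner_smul_right, inner_self_eq_norm_sq_to_K]
    rw [map_inv₀, Complex.conj_ofReal]
    field_simp
    rfl
  set w : (Fin g → ZMod N) → ThetaSp g N := fun μ => Aop g N h μ f with hwdef
  have hinner : ∀ μ ν, ⟪w μ, w ν⟫_ℂ = if μ = ν then (1:ℂ) else 0 := by
    intro μ ν
    rw [hwdef]
    dsimp only
    rw [Aop, W_adj g N h hsymp]
    have hcomp : Wop g N h (-((lft g N μ, 0) : HVec g)) (Aop g N h ν f)
        = Aop g N h (ν - μ) f := by
      rw [Aop]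
      have hm := W_mul g N h hsymp (-((lft g N μ, 0) : HVec g)) ((lft g N ν, 0) : HVec g)
      have happ := congrArg (fun T : ThetaSp g N →L[ℂ] ThetaSp g N => T f) hm
      simp only [ContinuousLinearMap.mul_apply, ContinuousLinearMap.smul_apply] at happ
      rw [happ]
      have hs : symp g (-((lft g N μ, 0) : HVec g)) ((lft g N ν, 0) : HVec g) = 0 := by
        rw [symp_neg_left]
        rw [show symp g ((lft g N μ, 0) : HVec g) ((lft g N ν, 0) : HVec g) = 0 from
          Finset.sum_eq_zero fun j _ => by simp]
        ring
      rw [hs, ee_zero, one_smul]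
      have hadd : (-((lft g N μ, 0) : HVec g)) + ((lft g N ν, 0) : HVec g)
          = ((lft g N ν - lft g N μ : Fin g → ℤ), (0 : Fin g → ℤ)) := by
        refine Prod.ext ?_ ?_
        · funext j
          simp only [Prod.fst_add, Prod.fst_neg, Pi.add_apply, Pi.neg_apply, Pi.sub_apply]
          ring
        · simp
      rw [hadd, W_fst g N h hsymp hN, redu_sub, redu_lft, redu_lft]
    rw [hcomp]
    rw [← hPf, P_adj g N h hsymp hN]
    have hop := congrArg (fun T : ThetaSp g N →L[ℂ] ThetaSp g N => T f)
      (PG g N h hsymp hN (ν - μ))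
    simp only [ContinuousLinearMap.mul_apply, ContinuousLinearMap.smul_apply] at hop
    rw [hop, hPf, inner_smul_right, hff, mul_one]
    by_cases hμν : μ = ν
    · rw [if_pos (by rw [hμν, sub_self]), if_pos hμν]
    · rw [if_neg (fun hc => hμν (sub_eq_zero.mp hc).symm), if_neg hμν]
  have horth : Orthonormal ℂ w := orthonormal_iff_ite.mpr hinner
  have hcard : Fintype.card (Fin g → ZMod N) = Module.finrank ℂ (ThetaSp g N) := by
    rw [finrank_euclideanSpace]
  let b2 : Module.Basis (Fin g → ZMod N) ℂ (ThetaSp g N) :=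
    basisOfLinearIndependentOfCardEqFinrank horth.linearIndependent hcard
  have hb2 : ⇑b2 = w := coe_basisOfLinearIndependentOfCardEqFinrank _ _
  let B2 : OrthonormalBasis (Fin g → ZMod N) ℂ (ThetaSp g N) :=
    b2.toOrthonormalBasis (by rwa [hb2])
  have hB2 : ∀ μ, B2 μ = w μ := fun μ => by
    rw [show B2 = b2.toOrthonormalBasis (by rwa [hb2]) from rfl, Module.Basis.coe_toOrthonormalBasis, hb2]
  set U : ThetaSp g N ≃ₗᵢ[ℂ] ThetaSp g N := B2.repr.symm with hUdef
  have hU : ∀ μ, U (sgl g N μ) = w μ := by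
    intro μ
    rw [hUdef, show sgl g N μ = EuclideanSpace.single μ (1:ℂ) from rfl]
    rw [B2.repr_symm_single μ]
    exact hB2 μ
  refine ⟨U, ?_⟩
  intro p q v
  have main : ∀ μ, U (Op g N (p, q) (sgl g N μ)) = Wop g N h (p, q) (U (sgl g N μ)) := by
    intro μ
    rw [Op_single, map_smul, hU, hU]
    simp only [hwdef]
    conv_rhs => rw [← hPf]
    have hop := congrArg (fun T : ThetaSp g N →L[ℂ] ThetaSp g N => T f)
      (key2 g N h hsymp hN ((p, q) : HVec g) μ)
    simp only [ContinuousLinearMap.mul_apply, ContinuousLinearMap.smul_apply] at hop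
    rw [hop, hPf, schCoeff_eq]
  have main' : U (Op g N (p, q) (U.symm v)) = Wop g N h (p, q) (U (U.symm v)) := by
    have hlin : (U.toLinearEquiv : ThetaSp g N →ₗ[ℂ] ThetaSp g N) ∘ₗ
          (Op g N (p, q) : ThetaSp g N →ₗ[ℂ] ThetaSp g N)
        = (Wop g N h (p, q) : ThetaSp g N →ₗ[ℂ] ThetaSp g N) ∘ₗ
          (U.toLinearEquiv : ThetaSp g N →ₗ[ℂ] ThetaSp g N) := by
      apply Module.Basis.ext (thetaBasis g N)
      intro μ
      simp only [LinearMap.comp_apply, thetaBasis_eq, ContinuousLinearMap.coe_coe,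
        LinearEquiv.coe_coe, LinearIsometryEquiv.coe_toLinearEquiv]
      exact main μ
    have hv := LinearMap.congr_fun hlin (U.symm v)
    simpa using hv
  rw [LinearIsometryEquiv.apply_symm_apply] at main'
  exact main'
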